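/- If a is a sequence of nonnegative reals in ℓ²(N) and κ ≥ 1, then the sequence b(l) = (1/(l+κ)) Σ_{m=0}^{l} a(m) satisfies ‖b‖_{ℓ²} ≤ 2‖a‖_{ℓ²}. -/

import Mathlib

/-!
STATEMENT 4 (discrete Hardy inequality): If `a` is a sequence of nonnegative reals in
`ℓ²(ℕ)` and `κ ≥ 1`, then `b l = (1/(l+κ)) ∑_{m=0}^{l} a m` satisfies `‖b‖_{ℓ²} ≤ 2‖a‖_{ℓ²}`.
-/
theorem stmt4 (a : ℕ → ℝ) (ha : ∀ m, 0 ≤ a m) (ha2 : Summable fun m => a m ^ 2)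
    (κ : ℝ) (hκ : 1 ≤ κ) :
    Summable (fun l : ℕ => (((Finset.range (l + 1)).sum a) / ((l : ℝ) + κ)) ^ 2) ∧
      Real.sqrt (∑' l : ℕ, (((Finset.range (l + 1)).sum a) / ((l : ℝ) + κ)) ^ 2) ≤
        2 * Real.sqrt (∑' m : ℕ, a m ^ 2) := by
  set A : ℕ → ℝ := fun l => (Finset.range (l + 1)).sum a with hA
  set b : ℕ → ℝ := fun l => A l / ((l : ℝ) + 1) with hb
  have hApos : ∀ l, 0 ≤ A l := fun l => Finset.sum_nonneg fun i _ => ha i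
  have hbpos : ∀ l, 0 ≤ b l := fun l =>
    div_nonneg (hApos l) (by positivity)
  have hAb : ∀ l : ℕ, A l = ((l : ℝ) + 1) * b l := by
    intro l
    simp only [hb]
    field_simp
  have hAsucc : ∀ l : ℕ, A (l + 1) = A l + a (l + 1) := by
    intro l
    simp [hA, Finset.sum_range_succ]
  -- key telescoping claim
  have key : ∀ N : ℕ, ((N : ℝ) + 1) * (b N) ^ 2 ≤
      ∑ l ∈ Finset.range (N + 1), (2 * a l * b l - (b l) ^ 2) := by
    intro N
    induction N with
    | zero =>
      have h0 : a 0 = b 0 := by simp [hb, hA]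
      simp [Finset.sum_range_one, ← h0]
      nlinarith [ha 0]
    | succ n ih =>
      rw [Finset.sum_range_succ]
      have h1 : a (n + 1) = ((n : ℝ) + 2) * b (n + 1) - ((n : ℝ) + 1) * b n := by
        have := hAsucc n
        rw [hAb n, hAb (n + 1)] at this
        push_cast at this ⊢
        linarith
      have h2 : ((n : ℝ) + 1) * (b n - b (n + 1)) ^ 2 ≥ 0 := by positivity
      push_cast
      push_cast at ih
      have hgoal : ((n:ℝ) + 1 + 1) * b (n + 1) ^ 2 + ((n:ℝ) + 1) * (b n - b (n + 1)) ^ 2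
          = ((n:ℝ) + 1) * b n ^ 2 + (2 * a (n + 1) * b (n + 1) - b (n + 1) ^ 2) := by
        rw [h1]; ring
      linarith [ih, h2, hgoal]
    -- end
  have key2 : ∀ N : ℕ, ∑ l ∈ Finset.range N, (b l) ^ 2 ≤
      2 * ∑ l ∈ Finset.range N, a l * b l := by
    intro N
    match N with
    | 0 => simp
    | (n + 1) =>
      have := key n
      have hnn : (0:ℝ) ≤ ((n : ℝ) + 1) * (b n) ^ 2 := by positivity
      have h3 : ∑ l ∈ Finset.range (n + 1), (2 * a l * b l - (b l) ^ 2)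
          = 2 * ∑ l ∈ Finset.range (n + 1), a l * b l
            - ∑ l ∈ Finset.range (n + 1), (b l) ^ 2 := by
        rw [Finset.sum_sub_distrib, Finset.mul_sum]
        simp [mul_assoc]
      linarith [h3 ▸ this]
  set T : ℝ := ∑' m : ℕ, a m ^ 2 with hT
  have hTnn : 0 ≤ T := tsum_nonneg fun m => sq_nonneg _
  have hbound : ∀ N : ℕ, ∑ l ∈ Finset.range N, (b l) ^ 2 ≤ 4 * T := by
    intro N
    have hcs := Finset.sum_mul_sq_le_sq_mul_sq (Finset.range N) a b
    have hab_nn : 0 ≤ ∑ l ∈ Finset.range N, a l * b l :=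
      Finset.sum_nonneg fun i _ => mul_nonneg (ha i) (hbpos i)
    have hsa : ∑ l ∈ Finset.range N, (a l) ^ 2 ≤ T :=
      Summable.sum_le_tsum _ (fun i _ => sq_nonneg _) ha2
    have hsb_nn : 0 ≤ ∑ l ∈ Finset.range N, (b l) ^ 2 :=
      Finset.sum_nonneg fun i _ => sq_nonneg _
    have h := key2 N
    nlinarith [hcs, mul_le_mul_of_nonneg_right hsa hsb_nn]
  -- now compare with κ
  have hterm : ∀ l : ℕ, (A l / ((l : ℝ) + κ)) ^ 2 ≤ (b l) ^ 2 := by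
    intro l
    have h1 : (0:ℝ) < (l : ℝ) + 1 := by positivity
    have h2 : ((l : ℝ) + 1) ≤ (l : ℝ) + κ := by linarith
    have : A l / ((l : ℝ) + κ) ≤ b l :=
      div_le_div_of_nonneg_left (hApos l) h1 h2 |>.trans_eq rfl
    have hnn : 0 ≤ A l / ((l : ℝ) + κ) := div_nonneg (hApos l) (by linarith)
    exact pow_le_pow_left₀ hnn this 2
  have hsb : Summable fun l => (b l) ^ 2 :=
    summable_of_sum_range_le (fun l => sq_nonneg _) hbound
  have hsum : Summable (fun l : ℕ => (A l / ((l : ℝ) + κ)) ^ 2) :=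
    hsb.of_nonneg_of_le (fun l => sq_nonneg _) hterm
  refine ⟨hsum, ?_⟩
  have htsum : (∑' l : ℕ, (A l / ((l : ℝ) + κ)) ^ 2) ≤ 4 * T := by
    calc (∑' l : ℕ, (A l / ((l : ℝ) + κ)) ^ 2) ≤ ∑' l, (b l) ^ 2 :=
          Summable.tsum_le_tsum hterm hsum hsb
      _ ≤ 4 * T := Real.tsum_le_of_sum_range_le (fun l => sq_nonneg _) hbound
  calc Real.sqrt (∑' l : ℕ, (A l / ((l : ℝ) + κ)) ^ 2) ≤ Real.sqrt (4 * T) :=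
        Real.sqrt_le_sqrt htsum
    _ = 2 * Real.sqrt T := by
        rw [Real.sqrt_mul (by norm_num : (0:ℝ) ≤ 4),
          show (4:ℝ) = 2^2 by norm_num, Real.sqrt_sq (by norm_num : (0:ℝ) ≤ 2)]
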